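/- Let Q ∈ ℝ^{a×b} and M ∈ ℝ^{b×a} be real matrices such that I_a + Q·M is invertible. Set K = (I_a + Q·M)⁻¹·Q. Then I_b − M·K is invertible and K·(I_b − M·K)⁻¹ = Q. Conversely, if K ∈ ℝ^{a×b} is such that I_b − M·K is invertible and Q = K·(I_b − M·K)⁻¹, then I_a + Q·M is invertible and (I_a + Q·M)⁻¹·Q = K. In other words, the maps ℋ(Q) = (I + Q·M)⁻¹·Q and ℋ⁻¹(K) = K·(I − M·K)⁻¹ are mutually inverse bijections between {Q : I + Q·M invertible} and {K : I − M·K invertible}. -/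

import Mathlib

open Matrix

/-- **Quadratic invariance change of variables** (Section 4.4): the maps
`ℋ(Q) = (I + Q·M)⁻¹·Q` and `ℋ⁻¹(K) = K·(I − M·K)⁻¹` are mutually inverse
bijections between `{Q : I + Q·M invertible}` and `{K : I − M·K invertible}`. -/
theorem qi_change_of_variables {a b : ℕ} (M : Matrix (Fin b) (Fin a) ℝ) :
    (∀ Q : Matrix (Fin a) (Fin b) ℝ, IsUnit (1 + Q * M) →
      IsUnit (1 - M * ((1 + Q * M)⁻¹ * Q)) ∧
      ((1 + Q * M)⁻¹ * Q) * (1 - M * ((1 + Q * M)⁻¹ * Q))⁻¹ = Q) ∧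
    (∀ K : Matrix (Fin a) (Fin b) ℝ, IsUnit (1 - M * K) →
      IsUnit (1 + (K * (1 - M * K)⁻¹) * M) ∧
      (1 + (K * (1 - M * K)⁻¹) * M)⁻¹ * (K * (1 - M * K)⁻¹) = K) := by
  constructor
  · intro Q hU
    have hdet : IsUnit (1 + Q * M).det := (isUnit_iff_isUnit_det _).mp hU
    have hAi : (1 + Q * M) * (1 + Q * M)⁻¹ = 1 := mul_nonsing_inv _ hdet
    have hiA : (1 + Q * M)⁻¹ * (1 + Q * M) = 1 := nonsing_inv_mul _ hdet
    set N := (1 + Q * M)⁻¹ with hN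
    have expand : (1 + M * Q) * (1 - M * (N * Q))
        = 1 + M * Q - (M * (N * Q) + M * Q * (M * (N * Q))) := by
      simp only [Matrix.add_mul, Matrix.mul_sub, Matrix.mul_one, Matrix.one_mul]
    have combine : M * (N * Q) + M * Q * (M * (N * Q))
        = M * (((1 + Q * M) * N) * Q) := by
      simp only [Matrix.add_mul, Matrix.mul_add, Matrix.one_mul, Matrix.mul_assoc]
    have h1 : (1 + M * Q) * (1 - M * (N * Q)) = 1 := by
      rw [expand, combine, hAi, Matrix.one_mul]
      abel
    have hu : IsUnit (1 - M * (N * Q)) := by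
      apply (isUnit_iff_isUnit_det _).mpr
      have hd := congrArg Matrix.det h1
      rw [det_mul, det_one] at hd
      exact IsUnit.of_mul_eq_one _ (by rw [mul_comm]; exact hd)
    refine ⟨hu, ?_⟩
    have hinv : (1 - M * (N * Q))⁻¹ = 1 + M * Q := inv_eq_left_inv h1
    rw [hinv]
    calc N * Q * (1 + M * Q)
        = N * ((1 + Q * M) * Q) := by
          simp only [Matrix.mul_add, Matrix.add_mul, Matrix.mul_one, Matrix.one_mul,
            Matrix.mul_assoc]
      _ = Q := by rw [← Matrix.mul_assoc, hiA, Matrix.one_mul]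
  · intro K hU
    have hdet : IsUnit (1 - M * K).det := (isUnit_iff_isUnit_det _).mp hU
    have hBi : (1 - M * K) * (1 - M * K)⁻¹ = 1 := mul_nonsing_inv _ hdet
    set N := (1 - M * K)⁻¹ with hN
    have key2 : (1 - K * M) * (K * N) = K := by
      calc (1 - K * M) * (K * N) = K * ((1 - M * K) * N) := by
            simp only [Matrix.sub_mul, Matrix.mul_sub, Matrix.one_mul, Matrix.mul_assoc]
        _ = K := by rw [hBi, Matrix.mul_one]
    have h2 : (1 - K * M) * (1 + (K * N) * M) = 1 := by
      have expand : (1 - K * M) * (1 + (K * N) * M)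
          = 1 - K * M + ((1 - K * M) * (K * N)) * M := by
        simp only [Matrix.sub_mul, Matrix.mul_add, Matrix.add_mul, Matrix.mul_one,
          Matrix.one_mul, Matrix.mul_assoc]
      rw [expand, key2]
      abel
    have hu : IsUnit (1 + (K * N) * M) := by
      apply (isUnit_iff_isUnit_det _).mpr
      have hd := congrArg Matrix.det h2
      rw [det_mul, det_one] at hd
      exact IsUnit.of_mul_eq_one _ (by rw [mul_comm]; exact hd)
    refine ⟨hu, ?_⟩
    have hinv : (1 + (K * N) * M)⁻¹ = 1 - K * M := inv_eq_left_inv h2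
    rw [hinv, key2]
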